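/- Let Ω be a convex subset of a topological vector space X. (a) If x̄ ∈ ri(Ω) and x̃ ∈ Ω, then the half-open segment (x̃, x̄] is contained in ri(Ω). (b) If x̄ ∈ iri(Ω) and x̃ ∈ Ω, then (x̃, x̄] ⊆ iri(Ω). (c) If in addition X is locally convex, x̄ ∈ qri(Ω) and x̃ ∈ Ω, then (x̃, x̄] ⊆ qri(Ω). -/

import Mathlib

open Set Pointwise Filter Topology

/-- The cone generated by a set `A`: `{t • a | t ≥ 0, a ∈ A}`. -/
def coneGen {X : Type*} [AddCommGroup X] [Module ℝ X] (A : Set X) : Set X :=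
  {y | ∃ t : ℝ, 0 ≤ t ∧ ∃ a ∈ A, y = t • a}

/-- A set is a linear subspace if it is the carrier of a submodule. -/
def IsLinSubspace {X : Type*} [AddCommGroup X] [Module ℝ X] (s : Set X) : Prop :=
  ∃ L : Submodule ℝ X, (L : Set X) = s

/-- Intrinsic relative interior. -/
def iri {X : Type*} [AddCommGroup X] [Module ℝ X] (Ω : Set X) : Set X :=
  {x ∈ Ω | IsLinSubspace (coneGen ((fun y => y - x) '' Ω))}

/-- Quasi-relative interior. -/
def qri {X : Type*} [AddCommGroup X] [Module ℝ X] [TopologicalSpace X] (Ω : Set X) : Set X :=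
  {x ∈ Ω | IsLinSubspace (closure (coneGen ((fun y => y - x) '' Ω)))}

/-- Relative interior in a topological vector space. -/
def ri {X : Type*} [AddCommGroup X] [Module ℝ X] [TopologicalSpace X] (Ω : Set X) : Set X :=
  {x ∈ Ω | ∃ V ∈ nhds x, V ∩ closure ((affineSpan ℝ Ω : Set X)) ⊆ Ω}

/-- Normal cone (functional-analytic version), a subset of the topological dual. -/
def normalCone {X : Type*} [AddCommGroup X] [Module ℝ X] [TopologicalSpace X]
    (Ω : Set X) (xb : X) : Set (X →L[ℝ] ℝ) :=
  {f | ∀ x ∈ Ω, f (x - xb) ≤ 0}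

/-- The half-open segment `(x̃, xb] = {(1 − λ)·x̃ + λ·xb | 0 < λ ≤ 1}`. -/
def halfOpenSegment {X : Type*} [AddCommGroup X] [Module ℝ X] (xt xb : X) : Set X :=
  {y | ∃ l : ℝ, 0 < l ∧ l ≤ 1 ∧ y = (1 - l) • xt + l • xb}

section aux
variable {X : Type*} [AddCommGroup X] [Module ℝ X] {Ω : Set X} {x v u : X}

lemma mem_coneGen {x v : X} :
    v ∈ coneGen ((fun y => y - x) '' Ω) ↔ ∃ t : ℝ, 0 ≤ t ∧ ∃ ω ∈ Ω, v = t • (ω - x) := by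
  constructor
  · rintro ⟨t, ht, a, ⟨ω, hω, rfl⟩, rfl⟩; exact ⟨t, ht, ω, hω, rfl⟩
  · rintro ⟨t, ht, ω, hω, rfl⟩; exact ⟨t, ht, ω - x, ⟨ω, hω, rfl⟩, rfl⟩

lemma zero_mem_coneGen (hx : x ∈ Ω) : (0:X) ∈ coneGen ((fun y => y - x) '' Ω) :=
  mem_coneGen.2 ⟨0, le_refl 0, x, hx, by simp⟩

lemma smul_mem_coneGen {t : ℝ} (ht : 0 ≤ t)
    (hv : v ∈ coneGen ((fun y => y - x) '' Ω)) :
    t • v ∈ coneGen ((fun y => y - x) '' Ω) := by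
  obtain ⟨s, hs, ω, hω, rfl⟩ := mem_coneGen.1 hv
  exact mem_coneGen.2 ⟨t*s, mul_nonneg ht hs, ω, hω, smul_smul t s _⟩

lemma add_mem_coneGen (hconv : Convex ℝ Ω)
    (hu : u ∈ coneGen ((fun y => y - x) '' Ω)) (hv : v ∈ coneGen ((fun y => y - x) '' Ω)) :
    u + v ∈ coneGen ((fun y => y - x) '' Ω) := by
  obtain ⟨t1, ht1, ω1, hω1, rfl⟩ := mem_coneGen.1 hu
  obtain ⟨t2, ht2, ω2, hω2, rfl⟩ := mem_coneGen.1 hv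
  by_cases hT : t1 + t2 = 0
  · have h1 : t1 = 0 := by linarith
    have h2 : t2 = 0 := by linarith
    subst h1; subst h2
    simpa using mem_coneGen.2 ⟨0, le_refl (0:ℝ), ω1, hω1, by simp⟩
  · have hT' : 0 < t1 + t2 := lt_of_le_of_ne (by linarith) (Ne.symm hT)
    refine mem_coneGen.2 ⟨t1+t2, hT'.le,
      (t1/(t1+t2)) • ω1 + (t2/(t1+t2)) • ω2,
      hconv hω1 hω2 (div_nonneg ht1 hT'.le) (div_nonneg ht2 hT'.le)
        (by field_simp), ?_⟩
    match_scalars <;> field_simp <;> ring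

lemma convex_coneGen (hconv : Convex ℝ Ω) :
    Convex ℝ (coneGen ((fun y => y - x) '' Ω)) := by
  intro u hu v hv a b ha hb _
  exact add_mem_coneGen hconv (smul_mem_coneGen ha hu) (smul_mem_coneGen hb hv)

end aux

/-- half-open segments from a point of the set to a point of
`ri`, `iri`, or `qri` stay in `ri`, `iri`, or `qri`, respectively (the `qri`
statement under local convexity). -/
theorem halfOpenSegment_subset_relative_interiors {X : Type*} [AddCommGroup X] [Module ℝ X]
    [TopologicalSpace X] [IsTopologicalAddGroup X] [ContinuousSMul ℝ X]
    (Ω : Set X) (hconv : Convex ℝ Ω) (xt : X) (hxt : xt ∈ Ω) (xb : X) :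
    (xb ∈ ri Ω → halfOpenSegment xt xb ⊆ ri Ω) ∧
    (xb ∈ iri Ω → halfOpenSegment xt xb ⊆ iri Ω) ∧
    (LocallyConvexSpace ℝ X → xb ∈ qri Ω → halfOpenSegment xt xb ⊆ qri Ω) := by
  refine ⟨?_, ?_, ?_⟩
  · -- part (a) : ri
    rintro ⟨hxbΩ, V, hV, hVsub⟩ z ⟨l, hl0, hl1, rfl⟩
    have hyΩ : (1 - l) • xt + l • xb ∈ Ω :=
      hconv hxt hxbΩ (by linarith) hl0.le (by ring)
    refine ⟨hyΩ, ?_⟩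
    have hl0' : (l:ℝ) ≠ 0 := ne_of_gt hl0
    let e : X ≃ₜ X :=
      (Homeomorph.smulOfNeZero l hl0').trans (Homeomorph.addLeft ((1-l) • xt))
    have he : ∀ w : X, e w = (1 - l) • xt + l • w := fun w => rfl
    refine ⟨e '' V, ?_, ?_⟩
    · have : e '' V ∈ map e (nhds xb) := image_mem_map hV
      rwa [e.map_nhds_eq xb, he xb] at this
    · rintro w ⟨⟨v, hvV, rfl⟩, hwcl⟩
      have hxts : xt ∈ (affineSpan ℝ Ω : Set X) := subset_affineSpan ℝ Ω hxt
      have hcont : Continuous (fun z : X => (1/l) • (z - xt) + xt) := by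
        fun_prop
      have hmaps : MapsTo (fun z : X => (1/l) • (z - xt) + xt)
          (affineSpan ℝ Ω : Set X) (affineSpan ℝ Ω : Set X) := by
        intro p hp
        have := (affineSpan ℝ Ω).smul_vsub_vadd_mem' (1/l) hp hxts hxts
        simpa [vsub_eq_sub, vadd_eq_add, add_comm] using this
      have hv_cl : v ∈ closure (affineSpan ℝ Ω : Set X) := by
        have h3 := map_mem_closure (f := fun z : X => (1/l) • (z - xt) + xt)
          hcont hwcl hmaps
        have h3' : (1/l) • (e v - xt) + xt ∈ closure (affineSpan ℝ Ω : Set X) := h3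
        have h4 : (1/l) • (e v - xt) + xt = v := by
          rw [he v]; match_scalars <;> field_simp <;> ring
        rwa [h4] at h3'
      have hvΩ : v ∈ Ω := hVsub ⟨hvV, hv_cl⟩
      rw [he v]
      exact hconv hxt hvΩ (by linarith) hl0.le (by ring)
  · -- part (b) : iri
    rintro ⟨hxbΩ, L, hL⟩ z ⟨l, hl0, hl1, rfl⟩
    set y := (1 - l) • xt + l • xb with hy
    have hyΩ : y ∈ Ω := hconv hxt hxbΩ (by linarith) hl0.le (by ring)
    have hext : ∀ ω ∈ Ω, ∃ t : ℝ, 0 ≤ t ∧ ∃ ω' ∈ Ω, xb - ω = t • (ω' - xb) := by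
      intro ω hω
      have h1 : ω - xb ∈ coneGen ((fun y => y - xb) '' Ω) :=
        mem_coneGen.2 ⟨1, zero_le_one, ω, hω, (one_smul ℝ _).symm⟩
      rw [← hL, SetLike.mem_coe] at h1
      have h2 : -(ω - xb) ∈ (L : Set X) := SetLike.mem_coe.2 (neg_mem h1)
      rw [hL] at h2
      obtain ⟨t, ht, ω', hω', heq⟩ := mem_coneGen.1 h2
      rw [neg_sub] at heq
      exact ⟨t, ht, ω', hω', heq⟩
    have hkey : ∀ ω ∈ Ω, ∃ s : ℝ, 0 ≤ s ∧ ∃ ω'' ∈ Ω, y - ω = s • (ω'' - y) := by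
      intro ω hω
      obtain ⟨t, ht, ω', hω', hωeq⟩ := hext ω hω
      have hωval : ω = xb - t • (ω' - xb) := by rw [← hωeq]; abel
      by_cases hD : 1 + t - l = 0
      · -- then t = 0 and l = 1, so y = xb = ω
        have ht0 : t = 0 := by linarith
        have hl1' : l = 1 := by linarith
        refine ⟨0, le_refl 0, xt, hxt, ?_⟩
        rw [hωval, hy, ht0, hl1']
        match_scalars <;> ring
      · have hD' : 0 < 1 + t - l := lt_of_le_of_ne (by linarith) (Ne.symm hD)
        refine ⟨(1 + t - l) / l, div_nonneg hD'.le hl0.le,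
          ((1+t)*(1-l)/(1+t-l)) • xt + (l*t/(1+t-l)) • ω',
          hconv hxt hω'
            (div_nonneg (mul_nonneg (by linarith) (by linarith)) hD'.le)
            (div_nonneg (mul_nonneg hl0.le ht) hD'.le)
            (by field_simp; ring), ?_⟩
        rw [hωval, hy]
        match_scalars <;> field_simp <;> ring
    have hneg : ∀ v ∈ coneGen ((fun z => z - y) '' Ω),
        -v ∈ coneGen ((fun z => z - y) '' Ω) := by
      intro v hv
      obtain ⟨t, ht, ω, hω, rfl⟩ := mem_coneGen.1 hv
      obtain ⟨s, hs, ω'', hω'', hkeq⟩ := hkey ω hω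
      refine mem_coneGen.2 ⟨t*s, mul_nonneg ht hs, ω'', hω'', ?_⟩
      rw [mul_smul, ← hkeq]
      match_scalars <;> ring
    refine ⟨hyΩ, ⟨{  carrier := coneGen ((fun z => z - y) '' Ω)
                     add_mem' := fun hu hv => add_mem_coneGen hconv hu hv
                     zero_mem' := zero_mem_coneGen hyΩ
                     smul_mem' := by
                       intro c v hv
                       rcases le_or_gt 0 c with hc | hc
                       · exact smul_mem_coneGen hc hv
                       · have h1 := smul_mem_coneGen (x := y)
                           (neg_nonneg.2 hc.le) (hneg v hv)
                         simpa [smul_neg, neg_smul, neg_neg] using h1 }, rfl⟩⟩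
  · -- part (c) : qri
    intro hlcs hxb z hz
    obtain ⟨hxbΩ, L, hL⟩ := hxb
    obtain ⟨l, hl0, hl1, rfl⟩ := hz
    set y := (1 - l) • xt + l • xb with hy
    have hyΩ : y ∈ Ω := hconv hxt hxbΩ (by linarith) hl0.le (by ring)
    set Cy := coneGen ((fun z => z - y) '' Ω) with hCy
    set Cb := coneGen ((fun z => z - xb) '' Ω) with hCb
    -- Cy ⊆ closure Cb
    have hsub : Cy ⊆ closure Cb := by
      intro v hv
      obtain ⟨t, ht, ω, hω, rfl⟩ := mem_coneGen.1 hv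
      have ha : t • (ω - xb) ∈ L := by
        rw [← SetLike.mem_coe, hL]
        exact subset_closure (mem_coneGen.2 ⟨t, ht, ω, hω, rfl⟩)
      have hb : (t*(1-l)) • (xt - xb) ∈ L := by
        rw [← SetLike.mem_coe, hL]
        exact subset_closure
          (mem_coneGen.2 ⟨t*(1-l), mul_nonneg ht (by linarith), xt, hxt, rfl⟩)
      have hc : t • (ω - y) = t • (ω - xb) - (t*(1-l)) • (xt - xb) := by
        rw [hy]; match_scalars <;> ring
      rw [← hL, SetLike.mem_coe] at *
      rw [hc]
      exact sub_mem ha hb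
    have hsub' : closure Cy ⊆ closure Cb :=
      closure_minimal hsub isClosed_closure
    -- f ≤ 0 on closure Cb implies f = 0 there (it is a subspace)
    have hconvCy : Convex ℝ (closure Cy) := (convex_coneGen hconv).closure
    -- negation closure of closure Cy
    have hneg : ∀ u ∈ closure Cy, -u ∈ closure Cy := by
      intro u hu
      by_contra hnu
      obtain ⟨f, c, hfc, hcu⟩ :=
        geometric_hahn_banach_closed_point hconvCy isClosed_closure hnu
      have hc0 : 0 < c := by
        have := hfc 0 (subset_closure (zero_mem_coneGen hyΩ))
        simpa using this
      have hfle : ∀ v ∈ Cy, f v ≤ 0 := by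
        intro v hv
        by_contra hpos
        push_neg at hpos
        have htv := hfc ((c / f v) • v)
          (subset_closure (smul_mem_coneGen (div_nonneg hc0.le hpos.le) hv))
        rw [map_smul, smul_eq_mul] at htv
        rw [div_mul_cancel₀ c (ne_of_gt hpos)] at htv
        exact lt_irrefl c htv
      have hfley : ∀ ω ∈ Ω, f ω ≤ f y := by
        intro ω hω
        have := hfle (ω - y) (mem_coneGen.2 ⟨1, zero_le_one, ω, hω, (one_smul ℝ _).symm⟩)
        rw [map_sub] at this
        linarith
      have hfy : f y = (1-l) * f xt + l * f xb := by
        rw [hy, map_add, map_smul, map_smul, smul_eq_mul, smul_eq_mul]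
      have hxtle : f xt ≤ f y := hfley xt hxt
      have hxble : f xb ≤ f y := hfley xb hxbΩ
      have hyxb : f y = f xb := by nlinarith
      have hfleb : ∀ v ∈ Cb, f v ≤ 0 := by
        intro v hv
        obtain ⟨t, ht, ω, hω, rfl⟩ := mem_coneGen.1 hv
        have h1 : f ω ≤ f xb := hyxb ▸ hfley ω hω
        rw [map_smul, smul_eq_mul, map_sub]
        have : f ω - f xb ≤ 0 := by linarith
        exact mul_nonpos_of_nonneg_of_nonpos ht this
      have hfleCb : ∀ v ∈ closure Cb, f v ≤ 0 := by
        have hcl : IsClosed {v : X | f v ≤ 0} :=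
          isClosed_le f.continuous continuous_const
        intro v hv
        exact closure_minimal hfleb hcl hv
      have hf0 : ∀ v ∈ closure Cb, f v = 0 := by
        intro v hv
        have h1 : f v ≤ 0 := hfleCb v hv
        have hvL : v ∈ L := by rw [← SetLike.mem_coe, hL]; exact hv
        have hnvL : -v ∈ closure Cb := by
          rw [← hL, SetLike.mem_coe]; exact neg_mem hvL
        have h2 : f (-v) ≤ 0 := hfleCb _ hnvL
        rw [map_neg] at h2
        linarith
      have huM : -u ∈ closure Cb := by
        have : u ∈ closure Cb := hsub' hu
        have hvL : u ∈ L := by rw [← SetLike.mem_coe, hL]; exact this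
        rw [← hL, SetLike.mem_coe]; exact neg_mem hvL
      have := hf0 _ huM
      linarith
    -- build the submodule with carrier closure Cy
    have hsmul : ∀ (t : ℝ), 0 ≤ t → ∀ u ∈ closure Cy, t • u ∈ closure Cy := by
      intro t ht u hu
      exact map_mem_closure (continuous_const_smul t) hu
        (fun w hw => smul_mem_coneGen ht hw)
    refine ⟨hyΩ, ⟨{  carrier := closure Cy
                     zero_mem' := subset_closure (zero_mem_coneGen hyΩ)
                     add_mem' := by
                       intro a b ha hb
                       have hmid : (1/2 : ℝ) • a + (1/2 : ℝ) • b ∈ closure Cy :=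
                         hconvCy ha hb (by norm_num) (by norm_num) (by norm_num)
                       have h2 := hsmul 2 (by norm_num) _ hmid
                       have : (2:ℝ) • ((1/2 : ℝ) • a + (1/2 : ℝ) • b) = a + b := by
                         match_scalars <;> norm_num
                       rwa [this] at h2
                     smul_mem' := by
                       intro c v hv
                       rcases le_or_gt 0 c with hc | hc
                       · exact hsmul c hc v hv
                       · have h1 := hsmul (-c) (neg_nonneg.2 hc.le) _ (hneg v hv)
                         simpa [smul_neg, neg_smul, neg_neg] using h1 }, rfl⟩⟩
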